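/- If the cost function c is invariant under every permutation of the models fixing S setwise (i.e., c depends only on the cardinality of its argument, c(Y) = g(|Y|) for some g : ℕ → ℝ), then chem(a, b) takes the same value for every pair of distinct models a, b ∈ S. -/

import Mathlib

open Finset

variable {M : Type*}

/-- The benefit of model `a` relative to a set `Y`: cost drop from adding `a`. -/
noncomputable def benefit [DecidableEq M] (c : Finset M → ℝ) (a : M) (Y : Finset M) : ℝ :=
  c Y - c (insert a Y)

/-- Interaction score of `a` against `b` on background set `X`. -/
noncomputable def dscore [DecidableEq M] (c : Finset M → ℝ) (a b : M) (X : Finset M) : ℝ :=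
  |benefit c a X - benefit c a (insert b X)| / c (insert a (insert b X))

/-- The chemistry of the pair `{a, b}` over the model pool `S`. -/
noncomputable def chem [DecidableEq M] (c : Finset M → ℝ) (S : Finset M) (a b : M) : ℝ :=
  ((S \ {a, b}).powerset).sup' (Finset.powerset_nonempty _)
    (fun X => max (dscore c a b X) (dscore c b a X))

/-- If the cost depends only on cardinality (equivalently, is invariant under
all permutations of models fixing `S` setwise), then chemistry takes the same
value on every pair of distinct models of `S`. -/
theorem chem_const_of_card_invariant [DecidableEq M] (S : Finset M) (c : Finset M → ℝ)
    (hc : ∀ Y ⊆ S, Y.Nonempty → 0 < c Y)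
    (g : ℕ → ℝ) (hcard : ∀ Y ⊆ S, c Y = g Y.card) :
    ∀ a ∈ S, ∀ b ∈ S, a ≠ b → ∀ a' ∈ S, ∀ b' ∈ S, a' ≠ b' →
      chem c S a b = chem c S a' b' := by
  -- the interaction score as a function of |X|
  set D : ℕ → ℝ := fun k =>
    |(g k - g (k+1)) - (g (k+1) - g (k+2))| / g (k+2) with hD
  have key : ∀ a ∈ S, ∀ b ∈ S, a ≠ b → ∀ X ⊆ S \ {a, b}, dscore c a b X = D X.card := by
    intro a ha b hb hab X hX
    have hXS : X ⊆ S := hX.trans (sdiff_subset)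
    have haX : a ∉ X := fun h => (Finset.mem_sdiff.mp (hX h)).2 (by simp)
    have hbX : b ∉ X := fun h => (Finset.mem_sdiff.mp (hX h)).2 (by simp)
    have hbXS : insert b X ⊆ S := Finset.insert_subset hb hXS
    have haXS : insert a X ⊆ S := Finset.insert_subset ha hXS
    have habXS : insert a (insert b X) ⊆ S := Finset.insert_subset ha hbXS
    have cb : (insert b X).card = X.card + 1 := Finset.card_insert_of_notMem hbX
    have ca : (insert a X).card = X.card + 1 := Finset.card_insert_of_notMem haX
    have cab : (insert a (insert b X)).card = X.card + 2 := by
      rw [Finset.card_insert_of_notMem (by simp [hab, haX]), cb]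
    simp only [dscore, benefit, hcard _ hXS, hcard _ hbXS, hcard _ haXS, hcard _ habXS,
      cb, ca, cab, hD]
  have keymax : ∀ a ∈ S, ∀ b ∈ S, a ≠ b → ∀ X ⊆ S \ {a, b},
      max (dscore c a b X) (dscore c b a X) = D X.card := by
    intro a ha b hb hab X hX
    have hX' : X ⊆ S \ {b, a} := by
      rwa [show ({b, a} : Finset M) = {a, b} by ext x; simp [or_comm]]
    rw [key a ha b hb hab X hX, key b hb a ha hab.symm X hX', max_self]
  have cardeq : ∀ a ∈ S, ∀ b ∈ S, a ≠ b → (S \ {a, b}).card = S.card - 2 := by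
    intro a ha b hb hab
    rw [Finset.card_sdiff_of_subset (by simp [Finset.insert_subset_iff, ha, hb])]
    simp [Finset.card_insert_of_notMem, hab]
  intro a ha b hb hab a' ha' b' hb' hab'
  have half : ∀ a ∈ S, ∀ b ∈ S, a ≠ b → ∀ a' ∈ S, ∀ b' ∈ S, a' ≠ b' →
      chem c S a b ≤ chem c S a' b' := by
    intro a ha b hb hab a' ha' b' hb' hab'
    unfold chem
    apply Finset.sup'_le
    intro X hX
    rw [Finset.mem_powerset] at hX
    have hcard : X.card ≤ (S \ {a', b'}).card := by
      rw [cardeq a' ha' b' hb' hab', ← cardeq a ha b hb hab]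
      exact Finset.card_le_card hX
    obtain ⟨Y, hY, hYc⟩ := Finset.exists_subset_card_eq hcard
    rw [keymax a ha b hb hab X hX, ← hYc, ← keymax a' ha' b' hb' hab' Y hY]
    exact Finset.le_sup' (fun X => max (dscore c a' b' X) (dscore c b' a' X)) (Finset.mem_powerset.mpr hY)
  exact le_antisymm (half a ha b hb hab a' ha' b' hb' hab')
    (half a' ha' b' hb' hab' a ha b hb hab)
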